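/- Consider a balanced mixture of two product distributions: X_1,…,X_N i.i.d. from D_1 with mean p_1, and Y_1,…,Y_N i.i.d. from D_2 with mean p_2, all independent. Let score(X,Y) = ⟨x,y⟩. For a balanced cut (S,S̄) obtained from the perfect partition T = ({X_i},{Y_i}) by swapping L points from each side (1 ≤ L ≤ N/2), define diff(T,(S,S̄),L) = score(S,S̄) − score(T). Then E[diff(T,(S,S̄),L)] = (N−L)·L·K·γ, where γ = (1/K)‖p_1−p_2‖_2^2. -/

import Mathlib

open MeasureTheory ProbabilityTheory

lemma int01 {Ω : Type*} [MeasurableSpace Ω] (μ : Measure Ω) [IsProbabilityMeasure μ]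
    (f : Ω → ℝ) (hm : Measurable f) (h01 : ∀ ω, f ω = 0 ∨ f ω = 1) :
    Integrable f μ := by
  refine Integrable.mono' (integrable_const 1) hm.aestronglyMeasurable
    (ae_of_all _ fun ω => ?_)
  rcases h01 ω with h | h <;> simp [h]

lemma pair_integral {Ω : Type*} [MeasurableSpace Ω] (μ : Measure Ω) [IsProbabilityMeasure μ]
    {K : ℕ} (f g : Ω → Fin K → ℝ) (pf pg : Fin K → ℝ)
    (hfm : ∀ k, Measurable (fun ω => f ω k)) (hgm : ∀ k, Measurable (fun ω => g ω k))
    (hf01 : ∀ ω k, f ω k = 0 ∨ f ω k = 1) (hg01 : ∀ ω k, g ω k = 0 ∨ g ω k = 1)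
    (hfmean : ∀ k, μ[fun ω => f ω k] = pf k) (hgmean : ∀ k, μ[fun ω => g ω k] = pg k)
    (hind : IndepFun f g μ) :
    μ[fun ω => ∑ k, f ω k * g ω k] = ∑ k, pf k * pg k := by
  rw [integral_finset_sum]
  · refine Finset.sum_congr rfl fun k _ => ?_
    have hik : IndepFun (fun ω => f ω k) (fun ω => g ω k) μ :=
      hind.comp (measurable_pi_apply k) (measurable_pi_apply k)
    have := hik.integral_mul_eq_mul_integral
      (int01 μ _ (hfm k) (fun ω => hf01 ω k)).aestronglyMeasurable (int01 μ _ (hgm k) (fun ω => hg01 ω k)).aestronglyMeasurable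
    simpa [hfmean k, hgmean k] using this
  · intro k _
    refine int01 μ _ ((hfm k).mul (hgm k)) fun ω => ?_
    rcases hf01 ω k with h | h <;> rcases hg01 ω k with h' | h' <;> simp [h, h']

/-- In the balanced mixture, for a balanced cut with L swapped pairs,
E[diff(T,(S,S̄),L)] = (N−L)·L·K·γ. -/
theorem expected_diff_cut_eq
    {Ω : Type*} [MeasurableSpace Ω] (μ : Measure Ω) [IsProbabilityMeasure μ]
    (N L K : ℕ) (hL1 : 1 ≤ L) (hL2 : 2 * L ≤ N)
    (p1 p2 : Fin K → ℝ) (γ : ℝ)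
    (hγ : γ = (1 / (K : ℝ)) * ∑ k, (p1 k - p2 k) ^ 2) (hK : 0 < K)
    (X Y : Fin (N - L) → Ω → Fin K → ℝ)
    (U V : Fin L → Ω → Fin K → ℝ)
    (hXmeas : ∀ i k, Measurable (fun ω => X i ω k))
    (hYmeas : ∀ i k, Measurable (fun ω => Y i ω k))
    (hUmeas : ∀ j k, Measurable (fun ω => U j ω k))
    (hVmeas : ∀ j k, Measurable (fun ω => V j ω k))
    (hX01 : ∀ i ω k, X i ω k = 0 ∨ X i ω k = 1)
    (hY01 : ∀ i ω k, Y i ω k = 0 ∨ Y i ω k = 1)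
    (hU01 : ∀ j ω k, U j ω k = 0 ∨ U j ω k = 1)
    (hV01 : ∀ j ω k, V j ω k = 0 ∨ V j ω k = 1)
    (hXmean : ∀ i k, μ[fun ω => X i ω k] = p1 k)
    (hYmean : ∀ i k, μ[fun ω => Y i ω k] = p2 k)
    (hUmean : ∀ j k, μ[fun ω => U j ω k] = p1 k)
    (hVmean : ∀ j k, μ[fun ω => V j ω k] = p2 k)
    (hindep : iIndepFun
      (m := fun _ : (Fin (N - L) ⊕ Fin (N - L)) ⊕ (Fin L ⊕ Fin L) =>
        (inferInstance : MeasurableSpace (Fin K → ℝ)))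
      (Sum.elim (Sum.elim X Y) (Sum.elim U V)) μ) :
    μ[fun ω => ∑ j, ∑ i,
        ((∑ k, V j ω k * Y i ω k) - (∑ k, V j ω k * X i ω k)
          + (∑ k, U j ω k * X i ω k) - (∑ k, U j ω k * Y i ω k))]
      = ((N : ℝ) - L) * L * K * γ := by
  have hF := Sum.elim (Sum.elim X Y) (Sum.elim U V)
  -- independence of all relevant pairs
  have hVY : ∀ j i, IndepFun (V j) (Y i) μ := fun j i => by
    simpa using hindep.indepFun (i := Sum.inr (Sum.inr j)) (j := Sum.inl (Sum.inr i)) (by simp)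
  have hVX : ∀ j i, IndepFun (V j) (X i) μ := fun j i => by
    simpa using hindep.indepFun (i := Sum.inr (Sum.inr j)) (j := Sum.inl (Sum.inl i)) (by simp)
  have hUX : ∀ j i, IndepFun (U j) (X i) μ := fun j i => by
    simpa using hindep.indepFun (i := Sum.inr (Sum.inl j)) (j := Sum.inl (Sum.inl i)) (by simp)
  have hUY : ∀ j i, IndepFun (U j) (Y i) μ := fun j i => by
    simpa using hindep.indepFun (i := Sum.inr (Sum.inl j)) (j := Sum.inl (Sum.inr i)) (by simp)
  -- integrability of inner product sums
  have intsum : ∀ (f g : Ω → Fin K → ℝ), (∀ k, Measurable (fun ω => f ω k)) →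
      (∀ k, Measurable (fun ω => g ω k)) →
      (∀ ω k, f ω k = 0 ∨ f ω k = 1) → (∀ ω k, g ω k = 0 ∨ g ω k = 1) →
      Integrable (fun ω => ∑ k, f ω k * g ω k) μ := by
    intro f g hfm hgm hf hg
    refine integrable_finset_sum _ fun k _ => ?_
    refine int01 μ _ ((hfm k).mul (hgm k)) fun ω => ?_
    rcases hf ω k with h | h <;> rcases hg ω k with h' | h' <;> simp [h, h']
  have iVY : ∀ j i, Integrable (fun ω => ∑ k, V j ω k * Y i ω k) μ := fun j i =>
    intsum _ _ (hVmeas j) (hYmeas i) (hV01 j) (hY01 i)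
  have iVX : ∀ j i, Integrable (fun ω => ∑ k, V j ω k * X i ω k) μ := fun j i =>
    intsum _ _ (hVmeas j) (hXmeas i) (hV01 j) (hX01 i)
  have iUX : ∀ j i, Integrable (fun ω => ∑ k, U j ω k * X i ω k) μ := fun j i =>
    intsum _ _ (hUmeas j) (hXmeas i) (hU01 j) (hX01 i)
  have iUY : ∀ j i, Integrable (fun ω => ∑ k, U j ω k * Y i ω k) μ := fun j i =>
    intsum _ _ (hUmeas j) (hYmeas i) (hU01 j) (hY01 i)
  have hterm : ∀ (j : Fin L) (i : Fin (N - L)),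
      μ[fun ω => ((∑ k, V j ω k * Y i ω k) - (∑ k, V j ω k * X i ω k)
          + (∑ k, U j ω k * X i ω k) - (∑ k, U j ω k * Y i ω k))]
        = ∑ k, (p1 k - p2 k) ^ 2 := by
    intro j i
    have h1 : Integrable (fun ω => (∑ k, V j ω k * Y i ω k) - (∑ k, V j ω k * X i ω k)) μ :=
      (iVY j i).sub (iVX j i)
    have h2 : Integrable (fun ω => ((∑ k, V j ω k * Y i ω k) - (∑ k, V j ω k * X i ω k))
        + (∑ k, U j ω k * X i ω k)) μ := h1.add (iUX j i)
    rw [integral_sub h2 (iUY j i),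
        integral_add h1 (iUX j i),
        integral_sub (iVY j i) (iVX j i),
        pair_integral μ _ _ p2 p2 (hVmeas j) (hYmeas i) (hV01 j) (hY01 i)
          (hVmean j) (hYmean i) (hVY j i),
        pair_integral μ _ _ p2 p1 (hVmeas j) (hXmeas i) (hV01 j) (hX01 i)
          (hVmean j) (hXmean i) (hVX j i),
        pair_integral μ _ _ p1 p1 (hUmeas j) (hXmeas i) (hU01 j) (hX01 i)
          (hUmean j) (hXmean i) (hUX j i),
        pair_integral μ _ _ p1 p2 (hUmeas j) (hYmeas i) (hU01 j) (hY01 i)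
          (hUmean j) (hYmean i) (hUY j i)]
    rw [← Finset.sum_sub_distrib, ← Finset.sum_add_distrib, ← Finset.sum_sub_distrib]
    refine Finset.sum_congr rfl fun k _ => by ring
  have iterm : ∀ (j : Fin L) (i : Fin (N - L)), Integrable (fun ω =>
      ((∑ k, V j ω k * Y i ω k) - (∑ k, V j ω k * X i ω k)
        + (∑ k, U j ω k * X i ω k) - (∑ k, U j ω k * Y i ω k))) μ := fun j i =>
    (((iVY j i).sub (iVX j i)).add (iUX j i)).sub (iUY j i)
  have isum : ∀ j : Fin L, Integrable (fun ω => ∑ i,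
      ((∑ k, V j ω k * Y i ω k) - (∑ k, V j ω k * X i ω k)
        + (∑ k, U j ω k * X i ω k) - (∑ k, U j ω k * Y i ω k))) μ := fun j =>
    integrable_finset_sum _ fun i _ => iterm j i
  rw [integral_finset_sum _ (fun j _ => isum j)]
  have : ∀ j : Fin L, μ[fun ω => ∑ i,
      ((∑ k, V j ω k * Y i ω k) - (∑ k, V j ω k * X i ω k)
          + (∑ k, U j ω k * X i ω k) - (∑ k, U j ω k * Y i ω k))]
      = (N - L : ℕ) * ∑ k, (p1 k - p2 k) ^ 2 := by
    intro j
    rw [integral_finset_sum _ (fun i _ => iterm j i)]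
    simp [hterm j, Finset.sum_const]
  rw [Finset.sum_congr rfl fun j _ => this j]
  have hcast : ((N - L : ℕ) : ℝ) = (N : ℝ) - L :=
    Nat.cast_sub (le_trans (by omega) hL2)
  rw [Finset.sum_const, hγ]
  simp only [Finset.card_univ, Fintype.card_fin, nsmul_eq_mul, hcast]
  field_simp
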